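/- Let n be a positive even integer and let (ε_i')_{i ≥ 1} be a sequence of i.i.d. Rademacher random variables (P(ε_i' = 1) = P(ε_i' = -1) = 1/2). Define the stopping time T as the first time t at which max( Σ_{i=1}^t 1_{ε_i' = 1}, Σ_{i=1}^t 1_{ε_i' = -1} ) = n/2. Then for every integer δ with 0 ≤ δ < n, P( T ≤ n - δ ) ≤ 2 e^{-δ²/(2(n-δ))}. -/

import Mathlib

open MeasureTheory ProbabilityTheory Finset

/-- Discrete intermediate value: a ℕ-valued sequence starting at 0 that increases by at
most 1 each step hits every value below `f N` at some time `≤ N`. -/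
lemma hit_aux (f : ℕ → ℕ) (h0 : f 0 = 0) (hstep : ∀ t, f (t + 1) ≤ f t + 1) :
    ∀ N c, c ≤ f N → ∃ t, t ≤ N ∧ f t = c := by
  intro N
  induction N with
  | zero => intro c hc; exact ⟨0, le_rfl, by omega⟩
  | succ N ih =>
    intro c hc
    by_cases h : c ≤ f N
    · obtain ⟨t, ht, hft⟩ := ih c h
      exact ⟨t, ht.trans (Nat.le_succ N), hft⟩
    · exact ⟨N + 1, le_rfl, by have := hstep N; omega⟩

/-- Deterministic core: if the signs are `±1` on `[1, n]` and the hitting time is `≤ m`,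
then the partial sum up to `m` has absolute value at least `δ = n - m`. -/
lemma key_det (n m δ : ℕ) (hn2 : n / 2 * 2 = n) (hmδ : m + δ = n)
    (g : ℕ → ℝ) (hg : ∀ i ∈ Finset.Icc 1 n, g i = 1 ∨ g i = -1)
    (hle : sInf {t : ℕ |
      max ((Finset.Icc 1 t).filter fun i => g i = 1).card
          ((Finset.Icc 1 t).filter fun i => g i = -1).card = n / 2} ≤ m) :
    (δ : ℝ) ≤ ∑ i ∈ Finset.Icc 1 m, g i ∨ (∑ i ∈ Finset.Icc 1 m, g i) ≤ -(δ : ℝ) := by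
  classical
  have hmn : m ≤ n := by omega
  set p : ℕ → ℕ := fun t => ((Finset.Icc 1 t).filter fun i => g i = 1).card with hpdef
  set q : ℕ → ℕ := fun t => ((Finset.Icc 1 t).filter fun i => g i = -1).card with hqdef
  have hq' : ∀ t, t ≤ n → ((Finset.Icc 1 t).filter fun i => g i = -1)
      = ((Finset.Icc 1 t).filter fun i => ¬ g i = 1) := by
    intro t ht
    apply Finset.filter_congr
    intro i hi
    have hgi := hg i (Finset.Icc_subset_Icc_right ht hi)
    constructor
    · intro h h1; rw [h1] at h; norm_num at h
    · intro h; rcases hgi with h1 | h1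
      · exact absurd h1 h
      · exact h1
  have hsum : ∀ t, t ≤ n → p t + q t = t := by
    intro t ht
    have hcc := Finset.card_filter_add_card_filter_not
      (s := Finset.Icc 1 t) (p := fun i => g i = 1)
    simp only [hpdef, hqdef]
    rw [hq' t ht, hcc, Nat.card_Icc]
    omega
  have hmono_p : ∀ {a b : ℕ}, a ≤ b → p a ≤ p b := fun {a b} hab =>
    Finset.card_le_card (Finset.filter_subset_filter _ (Finset.Icc_subset_Icc_right hab))
  have hmono_q : ∀ {a b : ℕ}, a ≤ b → q a ≤ q b := fun {a b} hab =>
    Finset.card_le_card (Finset.filter_subset_filter _ (Finset.Icc_subset_Icc_right hab))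
  -- the hitting set is nonempty
  have h0 : max (p 0) (q 0) = 0 := by
    have he : Finset.Icc 1 0 = (∅ : Finset ℕ) := Finset.Icc_eq_empty (by omega)
    simp [hpdef, hqdef, he]
  have hstep : ∀ t, max (p (t + 1)) (q (t + 1)) ≤ max (p t) (q t) + 1 := by
    intro t
    have hsub : ∀ (r : ℝ), ((Finset.Icc 1 (t + 1)).filter fun i => g i = r)
        ⊆ insert (t + 1) ((Finset.Icc 1 t).filter fun i => g i = r) := by
      intro r i hi
      simp only [Finset.mem_filter, Finset.mem_Icc, Finset.mem_insert] at hi ⊢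
      by_cases h : i = t + 1
      · exact Or.inl h
      · exact Or.inr ⟨⟨hi.1.1, by omega⟩, hi.2⟩
    have hp1 : p (t + 1) ≤ p t + 1 :=
      (Finset.card_le_card (hsub 1)).trans (Finset.card_insert_le _ _)
    have hq1 : q (t + 1) ≤ q t + 1 :=
      (Finset.card_le_card (hsub (-1))).trans (Finset.card_insert_le _ _)
    exact max_le (hp1.trans (Nat.add_le_add_right (le_max_left _ _) 1))
      (hq1.trans (Nat.add_le_add_right (le_max_right _ _) 1))
  have hfin : n / 2 ≤ max (p n) (q n) := by
    have hs := hsum n le_rfl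
    rcases le_total (p n) (q n) with h | h
    · rw [max_eq_right h]; omega
    · rw [max_eq_left h]; omega
  obtain ⟨t, htn, hft⟩ := hit_aux (fun t => max (p t) (q t)) h0 hstep n (n / 2) hfin
  have hAne : {t : ℕ | max (p t) (q t) = n / 2}.Nonempty := ⟨t, hft⟩
  have hmem : max (p (sInf {t : ℕ | max (p t) (q t) = n / 2}))
      (q (sInf {t : ℕ | max (p t) (q t) = n / 2})) = n / 2 := Nat.sInf_mem hAne
  have hTle : sInf {t : ℕ | max (p t) (q t) = n / 2} ≤ m := hle
  have hmax : n / 2 ≤ max (p m) (q m) := by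
    rw [← hmem]
    exact max_le_max (hmono_p hTle) (hmono_q hTle)
  -- value of the sum
  have hSval : ∑ i ∈ Finset.Icc 1 m, g i = (p m : ℝ) - (q m : ℝ) := by
    have hsplit := Finset.sum_filter_add_sum_filter_not (Finset.Icc 1 m)
      (fun i => g i = 1) g
    have h1 : ∑ i ∈ (Finset.Icc 1 m).filter (fun i => g i = 1), g i = (p m : ℝ) := by
      rw [Finset.sum_congr rfl (fun i hi => (Finset.mem_filter.mp hi).2)]
      simp [hpdef]
    have h2 : ∑ i ∈ (Finset.Icc 1 m).filter (fun i => ¬ g i = 1), g i = -(q m : ℝ) := by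
      rw [← hq' m hmn]
      rw [Finset.sum_congr rfl (fun i hi => (Finset.mem_filter.mp hi).2)]
      simp [hqdef]
    rw [← hsplit, h1, h2]
    ring
  have hsm := hsum m hmn
  rcases le_max_iff.mp hmax with h | h
  · left
    have hnat : δ + q m ≤ p m := by omega
    have : (δ : ℝ) + (q m : ℝ) ≤ (p m : ℝ) := by exact_mod_cast hnat
    rw [hSval]; linarith
  · right
    have hnat : δ + p m ≤ q m := by omega
    have : (δ : ℝ) + (p m : ℝ) ≤ (q m : ℝ) := by exact_mod_cast hnat
    rw [hSval]; linarith

/-- The exponential moment of a Rademacher variable: integrability and the mgf value. -/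
lemma rademacher_facts {Ω : Type} [MeasurableSpace Ω] (μ : Measure Ω)
    [IsProbabilityMeasure μ] (Y : Ω → ℝ) (hY : Measurable Y)
    (h1 : μ {ω | Y ω = 1} = 1 / 2) (h2 : μ {ω | Y ω = -1} = 1 / 2) (u : ℝ) :
    Integrable (fun ω => Real.exp (u * Y ω)) μ ∧ mgf Y μ u = Real.cosh u := by
  set A := {ω | Y ω = 1} with hAdef
  set B := {ω | Y ω = -1} with hBdef
  have hA : MeasurableSet A := hY (measurableSet_singleton 1)
  have hB : MeasurableSet B := hY (measurableSet_singleton (-1))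
  have hdisj : Disjoint A B := by
    rw [Set.disjoint_left]
    intro ω hωA hωB
    simp only [hAdef, hBdef, Set.mem_setOf_eq] at hωA hωB
    rw [hωA] at hωB; norm_num at hωB
  have hcompl : μ (A ∪ B)ᶜ = 0 := by
    rw [measure_compl (hA.union hB) (measure_ne_top _ _), measure_union hdisj hB, h1, h2,
      measure_univ, ENNReal.add_halves, tsub_self]
  set g : Ω → ℝ := fun ω => A.indicator (fun _ => Real.exp u) ω
      + B.indicator (fun _ => Real.exp (-u)) ω with hgdef
  have hae : (fun ω => Real.exp (u * Y ω)) =ᵐ[μ] g := by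
    have hAB : ∀ᵐ ω ∂μ, ω ∈ A ∪ B := by
      rw [← compl_compl (A ∪ B)] at hcompl ⊢
      exact (ae_iff (p := fun ω => ω ∈ (A ∪ B)ᶜᶜ)).mpr (by exact hcompl)
    filter_upwards [hAB] with ω hω
    rcases hω with hω | hω
    · have hY1 : Y ω = 1 := hω
      have hωB : ω ∉ B := fun hb => by
        have : Y ω = -1 := hb
        rw [hY1] at this; norm_num at this
      simp [hgdef, Set.indicator_of_mem hω, Set.indicator_of_notMem hωB, hY1]
    · have hY1 : Y ω = -1 := hω
      have hωA : ω ∉ A := fun ha => by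
        have : Y ω = 1 := ha
        rw [hY1] at this; norm_num at this
      simp [hgdef, Set.indicator_of_mem hω, Set.indicator_of_notMem hωA, hY1]
  have hintA : Integrable (A.indicator fun _ => Real.exp u) μ :=
    (integrable_const _).indicator hA
  have hintB : Integrable (B.indicator fun _ => Real.exp (-u)) μ :=
    (integrable_const _).indicator hB
  have hgint : Integrable g μ := hintA.add hintB
  have hint : Integrable (fun ω => Real.exp (u * Y ω)) μ := hgint.congr hae.symm
  refine ⟨hint, ?_⟩
  have htr : μ.real A = 1 / 2 := by rw [measureReal_def, h1]; simp
  have htr' : μ.real B = 1 / 2 := by rw [measureReal_def, h2]; simp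
  rw [mgf, integral_congr_ae hae, hgdef, integral_add hintA hintB,
    integral_indicator_const _ hA, integral_indicator_const _ hB, htr, htr',
    Real.cosh_eq]
  simp only [smul_eq_mul]
  ring

/-- **Control of the stopping time `T`.** Let `(ε'_i)_{i ≥ 1}` be i.i.d. Rademacher
variables and, for a positive even integer `n`, let `T` be the first time `t` at which
`max(∑_{i=1}^t 1_{ε'_i = 1}, ∑_{i=1}^t 1_{ε'_i = -1}) = n/2`. Then for every integer
`0 ≤ δ < n`, `P(T ≤ n - δ) ≤ 2 exp(-δ²/(2(n-δ)))`. -/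
theorem stopping_time_control
    (Ω : Type) [MeasurableSpace Ω] (μ : Measure Ω) [IsProbabilityMeasure μ]
    (n : ℕ) (hn : 0 < n) (hne : Even n)
    (ε' : ℕ → Ω → ℝ)
    (hmeas : ∀ i, Measurable (ε' i))
    -- (ε'_i)_{i ≥ 1} are independent ...
    (hindep : iIndepFun (fun i : {k : ℕ // 1 ≤ k} => ε' i) μ)
    -- ... and each is a Rademacher variable
    (hdist : ∀ i, 1 ≤ i → μ {ω | ε' i ω = 1} = 1 / 2 ∧ μ {ω | ε' i ω = -1} = 1 / 2)
    (T : Ω → ℕ)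
    (hT : ∀ ω, T ω = sInf {t : ℕ |
      max ((Finset.Icc 1 t).filter fun i => ε' i ω = 1).card
          ((Finset.Icc 1 t).filter fun i => ε' i ω = -1).card = n / 2})
    (δ : ℕ) (hδ : δ < n) :
    μ {ω | T ω ≤ n - δ} ≤
      ENNReal.ofReal (2 * Real.exp (-(δ : ℝ) ^ 2 / (2 * ((n : ℝ) - δ)))) := by
  classical
  set m := n - δ with hmdef
  have hm : 0 < m := by omega
  have hmδ : m + δ = n := by omega
  have hn2 : n / 2 * 2 = n := Nat.div_mul_cancel hne.two_dvd
  set S : Ω → ℝ := fun ω => ∑ i ∈ Finset.Icc 1 m, ε' i ω with hSdef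
  set G : Set Ω := {ω | ∀ i ∈ Finset.Icc 1 n, ε' i ω = 1 ∨ ε' i ω = -1} with hGdef
  -- the complement of G is null
  have hGc : μ Gᶜ = 0 := by
    have hsub : Gᶜ ⊆ ⋃ i ∈ (Finset.Icc 1 n : Finset ℕ),
        ({ω | ε' i ω = 1} ∪ {ω | ε' i ω = -1})ᶜ := by
      intro ω hω
      simp only [hGdef, Set.mem_compl_iff, Set.mem_setOf_eq, not_forall] at hω
      obtain ⟨i, hi, hωi⟩ := hω
      refine Set.mem_biUnion hi ?_
      simp only [Set.mem_compl_iff, Set.mem_union, Set.mem_setOf_eq]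
      tauto
    refine measure_mono_null hsub ?_
    refine (measure_biUnion_null_iff (Set.to_countable _)).mpr ?_
    intro i hi
    have hii : 1 ≤ i := (Finset.mem_Icc.mp hi).1
    obtain ⟨h1, h2⟩ := hdist i hii
    have hA : MeasurableSet {ω | ε' i ω = 1} := (hmeas i) (measurableSet_singleton 1)
    have hB : MeasurableSet {ω | ε' i ω = -1} := (hmeas i) (measurableSet_singleton (-1))
    have hdisj : Disjoint {ω | ε' i ω = 1} {ω | ε' i ω = -1} := by
      rw [Set.disjoint_left]
      intro ω hω1 hω2
      simp only [Set.mem_setOf_eq] at hω1 hω2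
      rw [hω1] at hω2; norm_num at hω2
    rw [measure_compl (hA.union hB) (measure_ne_top _ _), measure_union hdisj hB, h1, h2,
      measure_univ, ENNReal.add_halves, tsub_self]
  -- key deterministic inclusion
  have hkey : {ω | T ω ≤ m} ⊆ {ω | (δ : ℝ) ≤ S ω} ∪ {ω | S ω ≤ -(δ : ℝ)} ∪ Gᶜ := by
    intro ω hω
    by_cases hωG : ω ∈ G
    · have hle : sInf {t : ℕ |
          max ((Finset.Icc 1 t).filter fun i => ε' i ω = 1).card
              ((Finset.Icc 1 t).filter fun i => ε' i ω = -1).card = n / 2} ≤ m := by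
        rw [← hT ω]; exact hω
      rcases key_det n m δ hn2 hmδ (fun i => ε' i ω) hωG hle with h | h
      · exact Or.inl (Or.inl h)
      · exact Or.inl (Or.inr h)
    · exact Or.inr hωG
  -- Chernoff bound for the sum
  set t0 : ℝ := δ / m with ht0def
  have ht0 : 0 ≤ t0 := by positivity
  set s : Finset {k : ℕ // 1 ≤ k} := (Finset.Icc 1 m).subtype (fun k => 1 ≤ k) with hsdef
  set X : {k : ℕ // 1 ≤ k} → Ω → ℝ := fun i => ε' i with hXdef
  have hXmeas : ∀ i, Measurable (X i) := fun i => hmeas i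
  have hrad : ∀ (i : {k : ℕ // 1 ≤ k}) (u : ℝ),
      Integrable (fun ω => Real.exp (u * X i ω)) μ ∧ mgf (X i) μ u = Real.cosh u :=
    fun i u => rademacher_facts μ (ε' i) (hmeas i) (hdist i i.2).1 (hdist i i.2).2 u
  have hScard : s.card = m := by
    rw [hsdef, Finset.card_subtype (fun k : ℕ => 1 ≤ k) (Finset.Icc 1 m),
      Finset.filter_true_of_mem (fun i hi => (Finset.mem_Icc.mp hi).1), Nat.card_Icc]
    omega
  have hSeq : ∀ ω, (∑ i ∈ s, X i) ω = S ω := by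
    intro ω
    rw [Finset.sum_apply, hSdef, hsdef, hXdef]
    exact Finset.sum_subtype_of_mem (f := fun i => ε' i ω) (p := fun k : ℕ => 1 ≤ k)
      (fun i hi => (Finset.mem_Icc.mp hi).1)
  have hmgf : ∀ u : ℝ, mgf (∑ i ∈ s, X i) μ u = Real.cosh u ^ m := by
    intro u
    rw [ProbabilityTheory.iIndepFun.mgf_sum hindep hXmeas s,
      Finset.prod_congr rfl (fun i _ => (hrad i u).2), Finset.prod_const, hScard]
  have hsint : ∀ u : ℝ, Integrable (fun ω => Real.exp (u * (∑ i ∈ s, X i) ω)) μ :=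
    fun u => ProbabilityTheory.iIndepFun.integrable_exp_mul_sum hindep hXmeas
      (fun i _ => (hrad i u).1)
  have hup : (μ {ω | (δ : ℝ) ≤ S ω}).toReal ≤
      Real.exp (-t0 * δ) * Real.cosh t0 ^ m := by
    have h := ProbabilityTheory.measure_ge_le_exp_mul_mgf (X := ∑ i ∈ s, X i) (μ := μ)
      (δ : ℝ) ht0 (hsint t0)
    rw [hmgf t0] at h
    have hset : {ω | (δ : ℝ) ≤ S ω} = {ω | (δ : ℝ) ≤ (∑ i ∈ s, X i) ω} := by
      ext ω; simp only [Set.mem_setOf_eq, hSeq ω]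
    rw [hset]; exact h
  have hdown : (μ {ω | S ω ≤ -(δ : ℝ)}).toReal ≤
      Real.exp (-t0 * δ) * Real.cosh t0 ^ m := by
    have h := ProbabilityTheory.measure_le_le_exp_mul_mgf (X := ∑ i ∈ s, X i) (μ := μ)
      (-(δ : ℝ)) (neg_nonpos.mpr ht0) (hsint (-t0))
    rw [hmgf (-t0), Real.cosh_neg] at h
    have harith : -(-t0) * -(δ : ℝ) = -t0 * δ := by ring
    rw [harith] at h
    have hset : {ω | S ω ≤ -(δ : ℝ)} = {ω | (∑ i ∈ s, X i) ω ≤ -(δ : ℝ)} := by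
      ext ω; simp only [Set.mem_setOf_eq, hSeq ω]
    rw [hset]; exact h
  -- the numeric bound
  have hmR : (m : ℝ) = (n : ℝ) - δ := by
    rw [hmdef, Nat.cast_sub hδ.le]
  have hm0 : (m : ℝ) ≠ 0 := Nat.cast_ne_zero.mpr hm.ne'
  have hBB : Real.exp (-t0 * δ) * Real.cosh t0 ^ m ≤
      Real.exp (-(δ : ℝ) ^ 2 / (2 * ((n : ℝ) - δ))) := by
    have h1 : Real.cosh t0 ^ m ≤ Real.exp (t0 ^ 2 / 2) ^ m :=
      pow_le_pow_left₀ (Real.cosh_pos t0).le (Real.cosh_le_exp_half_sq t0) m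
    calc Real.exp (-t0 * δ) * Real.cosh t0 ^ m
        ≤ Real.exp (-t0 * δ) * Real.exp (t0 ^ 2 / 2) ^ m :=
          mul_le_mul_of_nonneg_left h1 (Real.exp_pos _).le
      _ = Real.exp (-t0 * δ + m * (t0 ^ 2 / 2)) := by
          rw [← Real.exp_nat_mul, ← Real.exp_add]
      _ = Real.exp (-(δ : ℝ) ^ 2 / (2 * ((n : ℝ) - δ))) := by
          congr 1
          rw [← hmR, ht0def]
          field_simp
          ring
  have hBnn : 0 ≤ Real.exp (-t0 * δ) * Real.cosh t0 ^ m :=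
    mul_nonneg (Real.exp_pos _).le (pow_nonneg (Real.cosh_pos t0).le m)
  have hup' : μ {ω | (δ : ℝ) ≤ S ω} ≤
      ENNReal.ofReal (Real.exp (-t0 * δ) * Real.cosh t0 ^ m) := by
    rw [← ENNReal.ofReal_toReal (measure_ne_top μ _)]
    exact ENNReal.ofReal_le_ofReal hup
  have hdown' : μ {ω | S ω ≤ -(δ : ℝ)} ≤
      ENNReal.ofReal (Real.exp (-t0 * δ) * Real.cosh t0 ^ m) := by
    rw [← ENNReal.ofReal_toReal (measure_ne_top μ _)]
    exact ENNReal.ofReal_le_ofReal hdown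
  calc μ {ω | T ω ≤ m}
      ≤ μ ({ω | (δ : ℝ) ≤ S ω} ∪ {ω | S ω ≤ -(δ : ℝ)} ∪ Gᶜ) := measure_mono hkey
    _ ≤ μ ({ω | (δ : ℝ) ≤ S ω} ∪ {ω | S ω ≤ -(δ : ℝ)}) + μ Gᶜ := measure_union_le _ _
    _ = μ ({ω | (δ : ℝ) ≤ S ω} ∪ {ω | S ω ≤ -(δ : ℝ)}) := by rw [hGc, add_zero]
    _ ≤ μ {ω | (δ : ℝ) ≤ S ω} + μ {ω | S ω ≤ -(δ : ℝ)} := measure_union_le _ _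
    _ ≤ ENNReal.ofReal (Real.exp (-t0 * δ) * Real.cosh t0 ^ m)
        + ENNReal.ofReal (Real.exp (-t0 * δ) * Real.cosh t0 ^ m) := add_le_add hup' hdown'
    _ = ENNReal.ofReal (2 * (Real.exp (-t0 * δ) * Real.cosh t0 ^ m)) := by
        rw [← ENNReal.ofReal_add hBnn hBnn]; congr 1; ring
    _ ≤ ENNReal.ofReal (2 * Real.exp (-(δ : ℝ) ^ 2 / (2 * ((n : ℝ) - δ)))) :=
        ENNReal.ofReal_le_ofReal (by linarith)
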